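/- Fix k > 0 and ℓ > 0 and consider f(x) = k log σ(x) + ℓ log σ(−x) for x ∈ ℝ, where σ is the sigmoid. Then f is strictly concave, attains its unique maximum at x* = log(k/ℓ), and f'(x) = k σ(−x) − ℓ σ(x). -/

import Mathlib

/-- For k, ℓ > 0, the SGNS pointwise objective f(x) = k log σ(x) + ℓ log σ(−x)
(with σ the sigmoid) is strictly concave, has derivative
f'(x) = k σ(−x) − ℓ σ(x), and attains its unique maximum at x* = log(k/ℓ). -/
theorem stmt19 (k l : ℝ) (hk : 0 < k) (hl : 0 < l)
    (sig : ℝ → ℝ) (hsig : ∀ x, sig x = 1 / (1 + Real.exp (-x)))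
    (f : ℝ → ℝ)
    (hf : ∀ x, f x = k * Real.log (sig x) + l * Real.log (sig (-x))) :
    StrictConcaveOn ℝ Set.univ f ∧
    (∀ x, deriv f x = k * sig (-x) - l * sig x) ∧
    IsMaxOn f Set.univ (Real.log (k / l)) ∧
    (∀ x, x ≠ Real.log (k / l) → f x < f (Real.log (k / l))) := by
  have hpos : ∀ x : ℝ, 0 < 1 + Real.exp x := fun x => by positivity
  -- explicit form of f
  have hf' : ∀ x, f x = -(k * Real.log (1 + Real.exp (-x)))
      - l * Real.log (1 + Real.exp x) := by
    intro x
    rw [hf, hsig, hsig, one_div, one_div, Real.log_inv, Real.log_inv, neg_neg]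
    ring
  -- the derivative
  set D : ℝ → ℝ := fun x => (k + l) / (1 + Real.exp x) - l with hD
  have hderiv : ∀ x, HasDerivAt f (D x) x := by
    intro x
    have h1 : HasDerivAt (fun y : ℝ => Real.exp (-y)) (-Real.exp (-x)) x := by
      have := (hasDerivAt_neg x).exp
      rwa [mul_neg_one] at this
    have h2 : HasDerivAt (fun y : ℝ => 1 + Real.exp (-y)) (-Real.exp (-x)) x := by
      exact h1.const_add 1
    have h3 : HasDerivAt (fun y : ℝ => Real.log (1 + Real.exp (-y)))
        (-Real.exp (-x) / (1 + Real.exp (-x))) x := h2.log (hpos (-x)).ne'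
    have h4 : HasDerivAt (fun y : ℝ => 1 + Real.exp y) (Real.exp x) x := by
      exact (Real.hasDerivAt_exp x).const_add 1
    have h5 : HasDerivAt (fun y : ℝ => Real.log (1 + Real.exp y))
        (Real.exp x / (1 + Real.exp x)) x := h4.log (hpos x).ne'
    have h6 : HasDerivAt (fun y : ℝ => -(k * Real.log (1 + Real.exp (-y)))
        - l * Real.log (1 + Real.exp y))
        (-(k * (-Real.exp (-x) / (1 + Real.exp (-x)))) - l * (Real.exp x / (1 + Real.exp x))) x :=
      ((h3.const_mul k).neg).sub (h5.const_mul l)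
    have hfe : f = fun y : ℝ => -(k * Real.log (1 + Real.exp (-y)))
        - l * Real.log (1 + Real.exp y) := funext hf'
    rw [hfe]
    convert h6 using 1
    have hex : Real.exp (-x) = (Real.exp x)⁻¹ := Real.exp_neg x
    rw [hD]
    field_simp [hex]
    have hm : Real.exp x * Real.exp (-x) = 1 := by rw [← Real.exp_add]; simp
    linear_combination (-k) * hm
  have hdiff : Differentiable ℝ f := fun x => (hderiv x).differentiableAt
  have hderiv' : deriv f = D := funext fun x => (hderiv x).deriv
  -- D is strictly antitone
  have hDanti : StrictAnti D := by
    intro x y hxy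
    have : (k + l) / (1 + Real.exp y) < (k + l) / (1 + Real.exp x) :=
      div_lt_div_of_pos_left (by linarith) (hpos x)
        (by simpa using Real.exp_lt_exp.2 hxy)
    simpa [hD] using sub_lt_sub_right this l
  have hconc : StrictConcaveOn ℝ Set.univ f :=
    StrictAnti.strictConcaveOn_univ_of_deriv hdiff.continuous (hderiv' ▸ hDanti)
  -- deriv formula in terms of sig
  have hderivsig : ∀ x, deriv f x = k * sig (-x) - l * sig x := by
    intro x
    rw [hderiv', hsig, hsig, neg_neg, hD]
    have hex : Real.exp (-x) = (Real.exp x)⁻¹ := Real.exp_neg x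
    field_simp [hex]
    have hm : Real.exp x * Real.exp (-x) = 1 := by rw [← Real.exp_add]; simp
    linear_combination (-l) * hm
  -- critical point
  set xs : ℝ := Real.log (k / l) with hxs
  have hexs : Real.exp xs = k / l := Real.exp_log (by positivity)
  have hD0 : D xs = 0 := by
    rw [hD]
    simp only [hexs]
    field_simp
    ring
  -- strict max
  have hlt : ∀ x, x ≠ xs → f x < f xs := by
    intro x hx
    rcases lt_or_gt_of_ne hx with h | h
    · have hmono : StrictMonoOn f (Set.Iic xs) := by
        apply strictMonoOn_of_deriv_pos (convex_Iic xs) hdiff.continuous.continuousOn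
        intro y hy
        rw [interior_Iic] at hy
        rw [hderiv']
        have := hDanti hy
        rw [hD0] at this
        linarith
      exact hmono (Set.mem_Iic.2 h.le) (Set.mem_Iic.2 (le_refl xs)) h
    · have hanti : StrictAntiOn f (Set.Ici xs) := by
        apply strictAntiOn_of_deriv_neg (convex_Ici xs) hdiff.continuous.continuousOn
        intro y hy
        rw [interior_Ici] at hy
        rw [hderiv']
        have := hDanti hy
        rw [hD0] at this
        linarith
      exact hanti (Set.mem_Ici.2 (le_refl xs)) (Set.mem_Ici.2 h.le) h
  refine ⟨hconc, hderivsig, ?_, hlt⟩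
  intro x _
  simp only [Set.mem_setOf_eq]
  rcases eq_or_ne x xs with rfl | h
  · exact le_rfl
  · exact (hlt x h).le
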